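/- Soundness of Σ_D(CS) over regular jstit frames: let CS be a constant specification and let A ∈ Form^Ag with ⊢_CS A. Then A is valid in every model in Mod_CS(𝓕^Ag_reg), i.e. in every CS-normal jstit model based on a regular jstit frame for Ag. -/

import Mathlib

/-! Preliminaries: temporal frames, stit frames, jstit frames, the language of
JA-STIT, jstit models, satisfaction, and the Hilbert system Σ_D(CS). -/

/-- A temporal frame: a nonempty set of moments with a partial order satisfying
historical connection and no backward branching. -/
structure TemporalFrame (Mo : Type) : Type where
  le : Mo → Mo → Prop
  le_refl : ∀ m, le m m
  le_antisymm : ∀ {m m'}, le m m' → le m' m → m = m'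
  le_trans : ∀ {m1 m2 m3}, le m1 m2 → le m2 m3 → le m1 m3
  nonempty : Nonempty Mo
  hist_conn : ∀ m m1, ∃ m2, le m2 m ∧ le m2 m1
  no_backward : ∀ m m1 m2, le m1 m → le m2 m → le m1 m2 ∨ le m2 m1

namespace TemporalFrame

variable {Mo : Type} (T : TemporalFrame Mo)

/-- The strict companion of the temporal order. -/
def lt (m m' : Mo) : Prop := T.le m m' ∧ m ≠ m'

/-- A history is a maximal chain of moments w.r.t. the temporal order. -/
def IsHistory (h : Set Mo) : Prop :=
  IsChain T.le h ∧ ∀ h' : Set Mo, IsChain T.le h' → h ⊆ h' → h' = h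

/-- `T.H m` is the set of histories passing through the moment `m`. -/
def H (m : Mo) : Set (Set Mo) := { h | T.IsHistory h ∧ m ∈ h }

/-- Histories `h` and `g` are undivided at `m`. -/
def Undiv (m : Mo) (h g : Set Mo) : Prop := ∃ m', T.lt m m' ∧ m' ∈ h ∧ m' ∈ g

/-- `m'` is an immediate successor of `m`. -/
def Next (m m' : Mo) : Prop := T.lt m m' ∧ ∀ m'', T.lt m'' m' → T.le m'' m

/-- Mixed successor condition on (the temporal part of) a frame. -/
def MixSucc : Prop :=
  ∀ m m1 : Mo,
    (T.lt m m1 → ∃ m2, T.le m2 m1 ∧ T.Next m m2) ∨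
    (∀ h ∈ T.H m, ∀ g ∈ T.H m, T.Undiv m h g)

end TemporalFrame

/-- A stit frame for an agent community `Ag`: a temporal frame together with a choice
function assigning to each moment and agent a partition of the histories through that
moment, subject to no choice between undivided histories and independence of agents. -/
structure StitFrame (Mo : Type) (Ag : Type) extends TemporalFrame Mo where
  choice : Mo → Ag → Set (Set (Set Mo))
  choice_cell_nonempty : ∀ m j C, C ∈ choice m j → C.Nonempty
  choice_cell_sub : ∀ m j C, C ∈ choice m j → C ⊆ toTemporalFrame.H m
  choice_cover : ∀ m j h, h ∈ toTemporalFrame.H m → ∃ C ∈ choice m j, h ∈ C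
  choice_disjoint : ∀ m j C C', C ∈ choice m j → C' ∈ choice m j →
    (C ∩ C').Nonempty → C = C'
  no_choice_undiv : ∀ m j h h', h ∈ toTemporalFrame.H m → h' ∈ toTemporalFrame.H m →
    toTemporalFrame.Undiv m h h' → ∀ C ∈ choice m j, h ∈ C → h' ∈ C
  independence : ∀ m (f : Ag → Set (Set Mo)), (∀ j, f j ∈ choice m j) →
    (⋂ j, f j).Nonempty

/-- A justification stit (jstit) frame for `Ag`: a stit frame together with two
epistemic preorders `R ⊆ R_e`, with the temporal order included in `R`. -/
structure JstitFrame (Mo : Type) (Ag : Type) extends StitFrame Mo Ag where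
  R : Mo → Mo → Prop
  Re : Mo → Mo → Prop
  R_refl : ∀ m, R m m
  R_trans : ∀ {m1 m2 m3}, R m1 m2 → R m2 m3 → R m1 m3
  Re_refl : ∀ m, Re m m
  Re_trans : ∀ {m1 m2 m3}, Re m1 m2 → Re m2 m3 → Re m1 m3
  R_sub_Re : ∀ {m m'}, R m m' → Re m m'
  le_sub_R : ∀ {m m'}, le m m' → R m m'

namespace JstitFrame

variable {Mo : Type} {Ag : Type} (F : JstitFrame Mo Ag)

/-- The family `Θ_m` of subsets of the set of moments associated with a moment `m`. -/
def Theta (m : Mo) : Set (Set Mo) :=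
  { S | m ∈ S ∧
    (∀ m1 m2, m1 ∈ S → F.Re m1 m2 → m2 ∈ S) ∧
    (∀ m1, (∀ h ∈ F.toTemporalFrame.H m1,
        ∃ m2 ∈ h, F.toTemporalFrame.Next m1 m2 ∧ m2 ∈ S) → m1 ∈ S) ∧
    (∀ m1, m1 ∈ S →
      (∀ m2, F.toTemporalFrame.lt m2 m1 →
        ∃ m3, F.toTemporalFrame.lt m2 m3 ∧ F.toTemporalFrame.lt m3 m1) →
      ∃ m4, F.toTemporalFrame.lt m4 m1 ∧ m4 ∈ S) }

/-- A jstit frame is unirelational iff `R_e ⊆ R`. -/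
def Unirelational : Prop := ∀ m m', F.Re m m' → F.R m m'

/-- Regularity of a jstit frame. -/
def Regular : Prop :=
  ∀ m m1 : Mo, F.toTemporalFrame.lt m m1 →
    (∃ S : Set Mo,
      (∀ m0, F.toTemporalFrame.lt m m0 → F.le m0 m1 → S ∈ F.Theta m0) ∧
      m ∉ S ∧
      ∃ h' ∈ F.toTemporalFrame.H m,
        (∀ g ∈ F.toTemporalFrame.H m1, ¬ F.toTemporalFrame.Undiv m h' g) ∧
        (∀ m' ∈ h', F.toTemporalFrame.Next m m' → m' ∉ S)) →
    ∃ m2, F.le m2 m1 ∧ F.toTemporalFrame.Next m m2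

end JstitFrame

/-- Proof polynomials over proof variables `PVar` and proof constants `PConst`. -/
inductive Pol (PVar PConst : Type) : Type
  | var : PVar → Pol PVar PConst
  | const : PConst → Pol PVar PConst
  | plus : Pol PVar PConst → Pol PVar PConst → Pol PVar PConst
  | times : Pol PVar PConst → Pol PVar PConst → Pol PVar PConst
  | bang : Pol PVar PConst → Pol PVar PConst

/-- Formulas of JA-STIT. -/
inductive Form (Ag PVar PConst PropVar : Type) : Type
  | pv : PropVar → Form Ag PVar PConst PropVar
  | and : Form Ag PVar PConst PropVar → Form Ag PVar PConst PropVar →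
      Form Ag PVar PConst PropVar
  | neg : Form Ag PVar PConst PropVar → Form Ag PVar PConst PropVar
  | stit : Ag → Form Ag PVar PConst PropVar → Form Ag PVar PConst PropVar
  | box : Form Ag PVar PConst PropVar → Form Ag PVar PConst PropVar
  | proves : Pol PVar PConst → Form Ag PVar PConst PropVar → Form Ag PVar PConst PropVar
  | know : Form Ag PVar PConst PropVar → Form Ag PVar PConst PropVar
  | ann : Pol PVar PConst → Form Ag PVar PConst PropVar

namespace Form

variable {Ag PVar PConst PropVar : Type}

/-- Implication, defined as usual from `¬` and `∧`. -/
def imp (A B : Form Ag PVar PConst PropVar) : Form Ag PVar PConst PropVar :=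
  neg (and A (neg B))

/-- Disjunction, defined as usual. -/
def or (A B : Form Ag PVar PConst PropVar) : Form Ag PVar PConst PropVar :=
  neg (and (neg A) (neg B))

/-- The dual `◇` of the historical necessity modality. -/
def dia (A : Form Ag PVar PConst PropVar) : Form Ag PVar PConst PropVar :=
  neg (box (neg A))

/-- Falsum, defined as usual. -/
def bot [Inhabited PropVar] : Form Ag PVar PConst PropVar :=
  and (pv default) (neg (pv default))

end Form

/-- Conjunction of a nonempty list of formulas (head plus tail). -/
def andList {Ag PVar PConst PropVar : Type} :
    Form Ag PVar PConst PropVar → List (Form Ag PVar PConst PropVar) →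
      Form Ag PVar PConst PropVar
  | A, [] => A
  | A, B :: L => Form.and A (andList B L)

/-- Disjunction of a list of formulas. -/
def bigOr {Ag PVar PConst PropVar : Type} [Inhabited PropVar] :
    List (Form Ag PVar PConst PropVar) → Form Ag PVar PConst PropVar
  | [] => Form.bot
  | [A] => A
  | A :: B :: L => Form.or A (bigOr (B :: L))

/-- A classical propositional tautology: a formula true under every Boolean valuation
commuting with `∧` and `¬` (all other formulas being treated as atoms). -/
def Tautology {Ag PVar PConst PropVar : Type} (A : Form Ag PVar PConst PropVar) : Prop :=
  ∀ v : Form Ag PVar PConst PropVar → Bool,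
    (∀ B C, v (Form.and B C) = (v B && v C)) →
    (∀ B, v (Form.neg B) = !v B) →
    v A = true

/-- The axiom schemes (A0)–(A9) of Σ_D. -/
inductive Ax {Ag PVar PConst PropVar : Type} : Form Ag PVar PConst PropVar → Prop
  -- (A0) classical propositional tautologies
  | a0 {A} : Tautology A → Ax A
  -- (A1) S5 axioms for □
  | boxK {A B} : Ax (Form.imp (Form.box (Form.imp A B))
      (Form.imp (Form.box A) (Form.box B)))
  | boxT {A} : Ax (Form.imp (Form.box A) A)
  | box4 {A} : Ax (Form.imp (Form.box A) (Form.box (Form.box A)))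
  | box5 {A} : Ax (Form.imp (Form.neg (Form.box A)) (Form.box (Form.neg (Form.box A))))
  -- (A1) S5 axioms for each [j]
  | stitK {j : Ag} {A B} : Ax (Form.imp (Form.stit j (Form.imp A B))
      (Form.imp (Form.stit j A) (Form.stit j B)))
  | stitT {j : Ag} {A} : Ax (Form.imp (Form.stit j A) A)
  | stit4 {j : Ag} {A} : Ax (Form.imp (Form.stit j A) (Form.stit j (Form.stit j A)))
  | stit5 {j : Ag} {A} : Ax (Form.imp (Form.neg (Form.stit j A))
      (Form.stit j (Form.neg (Form.stit j A))))
  -- (A2)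
  | a2 {j : Ag} {A} : Ax (Form.imp (Form.box A) (Form.stit j A))
  -- (A3), for pairwise distinct agents
  | a3 {p : Ag × Form Ag PVar PConst PropVar} {L : List (Ag × Form Ag PVar PConst PropVar)} :
      (((p :: L).map Prod.fst).Nodup) →
      Ax (Form.imp
        (andList (Form.dia (Form.stit p.1 p.2)) (L.map fun q => Form.dia (Form.stit q.1 q.2)))
        (Form.dia (andList (Form.stit p.1 p.2) (L.map fun q => Form.stit q.1 q.2))))
  -- (A4)
  | a4 {s t : Pol PVar PConst} {A B} : Ax (Form.imp (Form.proves s (Form.imp A B))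
      (Form.imp (Form.proves t A) (Form.proves (Pol.times s t) B)))
  -- (A5)
  | a5 {t : Pol PVar PConst} {A} : Ax (Form.imp (Form.proves t A)
      (Form.and (Form.proves (Pol.bang t) (Form.proves t A)) (Form.know A)))
  -- (A6)
  | a6 {s t : Pol PVar PConst} {A} : Ax (Form.imp
      (Form.or (Form.proves s A) (Form.proves t A)) (Form.proves (Pol.plus s t) A))
  -- (A7) S4 axioms for K
  | knowK {A B} : Ax (Form.imp (Form.know (Form.imp A B))
      (Form.imp (Form.know A) (Form.know B)))
  | knowT {A} : Ax (Form.imp (Form.know A) A)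
  | know4 {A} : Ax (Form.imp (Form.know A) (Form.know (Form.know A)))
  -- (A8)
  | a8 {A} : Ax (Form.imp (Form.know A) (Form.box (Form.know (Form.box A))))
  -- (A9)
  | a9 {t : Pol PVar PConst} : Ax (Form.imp (Form.box (Form.ann t))
      (Form.know (Form.box (Form.ann t))))

/-- Iterated prefixes `c_n : … : c_1 : A` of instances `A` of the axiom schemes. -/
inductive ConstIter {Ag PVar PConst PropVar : Type} : Form Ag PVar PConst PropVar → Prop
  | base {c : PConst} {A} : Ax A → ConstIter (Form.proves (Pol.const c) A)
  | step {c : PConst} {B} : ConstIter B → ConstIter (Form.proves (Pol.const c) B)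

/-- A constant specification: a set of formulas of the form `c_n : … : c_1 : A` with `A`
an instance of (A0)–(A9), closed under deleting the outermost constant. -/
def IsConstSpec {Ag PVar PConst PropVar : Type}
    (CS : Set (Form Ag PVar PConst PropVar)) : Prop :=
  (∀ B ∈ CS, ConstIter B) ∧
  ∀ (c c' : PConst) (B : Form Ag PVar PConst PropVar),
    Form.proves (Pol.const c) (Form.proves (Pol.const c') B) ∈ CS →
    Form.proves (Pol.const c') B ∈ CS

/-- Provability in Σ_D(CS): axioms (A0)–(A9), modus ponens (R1), K-necessitation (R2),
the rule (R_D) and the rule (R_CS). -/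
inductive Proves {Ag PVar PConst PropVar : Type} [Inhabited PropVar]
    (CS : Set (Form Ag PVar PConst PropVar)) : Form Ag PVar PConst PropVar → Prop
  | ax {A} : Ax A → Proves CS A
  | mp {A B} : Proves CS (Form.imp A B) → Proves CS A → Proves CS B
  | nec {A} : Proves CS A → Proves CS (Form.know A)
  | rd {A : Form Ag PVar PConst PropVar} {ts ss : List (Pol PVar PConst)}
      (hne : ts ++ ss ≠ []) :
      Proves CS (Form.imp (Form.know A)
        (bigOr ((ts.map fun t => Form.neg (Form.box (Form.ann t))) ++
                (ss.map fun s => Form.box (Form.ann s))))) →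
      Proves CS (Form.imp (Form.know A)
        (bigOr ((ts.map fun t => Form.neg (Form.ann t)) ++
                (ss.map fun s => Form.ann s))))
  | rcs {B} : B ∈ CS → Proves CS B

/-- Γ is consistent in Σ_D(CS): no finite nonempty conjunction of members of Γ provably
implies falsum. -/
def CSConsistent {Ag PVar PConst PropVar : Type} [Inhabited PropVar]
    (CS Γ : Set (Form Ag PVar PConst PropVar)) : Prop :=
  ¬ ∃ (A : Form Ag PVar PConst PropVar) (L : List (Form Ag PVar PConst PropVar)),
      A ∈ Γ ∧ (∀ B ∈ L, B ∈ Γ) ∧ Proves CS (Form.imp (andList A L) Form.bot)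

/-- A jstit model for `Ag`: a jstit frame together with `Act`, an admissible evidence
function `E` and an evaluation `V`, subject to the semantical constraints. -/
structure JstitModel (Mo : Type) (Ag PVar PConst PropVar : Type)
    extends JstitFrame Mo Ag where
  act : Mo → Set Mo → Set (Pol PVar PConst)
  ev : Mo → Pol PVar PConst → Set (Form Ag PVar PConst PropVar)
  val : PropVar → Set (Mo × Set Mo)
  -- monotonicity of evidence
  ev_mono : ∀ m m' t, Re m m' → ev m t ⊆ ev m' t
  -- evidence closure properties
  ev_app : ∀ m s t A B, Form.imp A B ∈ ev m s → A ∈ ev m t → B ∈ ev m (Pol.times s t)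
  ev_sum_left : ∀ m s t, ev m s ⊆ ev m (Pol.plus s t)
  ev_sum_right : ∀ m s t, ev m t ⊆ ev m (Pol.plus s t)
  ev_bang : ∀ m t A, A ∈ ev m t → Form.proves t A ∈ ev m (Pol.bang t)
  -- expansion of presented proofs
  expansion : ∀ m m' h, toTemporalFrame.lt m' m → h ∈ toTemporalFrame.H m →
    act m' h ⊆ act m h
  -- no new proofs guaranteed
  no_new : ∀ m t, (∀ h ∈ toTemporalFrame.H m, t ∈ act m h) →
    ∃ m' h, toTemporalFrame.lt m' m ∧ h ∈ toTemporalFrame.H m ∧ t ∈ act m' h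
  -- presenting a new proof makes histories divide
  divide : ∀ m h h', h ∈ toTemporalFrame.H m → h' ∈ toTemporalFrame.H m →
    toTemporalFrame.Undiv m h h' → act m h = act m h'
  -- presented proofs are epistemically transparent
  transparent : ∀ m m' t, Re m m' → (∀ h ∈ toTemporalFrame.H m, t ∈ act m h) →
    ∀ h' ∈ toTemporalFrame.H m', t ∈ act m' h'

namespace JstitModel

variable {Mo Ag PVar PConst PropVar : Type}

/-- `Act_m`, the set of proofs presented at `m` under every history through `m`. -/
def ActM (M : JstitModel Mo Ag PVar PConst PropVar) (m : Mo) : Set (Pol PVar PConst) :=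
  { t | ∀ h ∈ M.toTemporalFrame.H m, t ∈ M.act m h }

/-- The satisfaction relation for jstit models. -/
def Sat (M : JstitModel Mo Ag PVar PConst PropVar) :
    Form Ag PVar PConst PropVar → Mo → Set Mo → Prop
  | Form.pv p, m, h => (m, h) ∈ M.val p
  | Form.and A B, m, h => M.Sat A m h ∧ M.Sat B m h
  | Form.neg A, m, h => ¬ M.Sat A m h
  | Form.stit j A, m, h => ∀ h' C, C ∈ M.choice m j → h ∈ C → h' ∈ C → M.Sat A m h'
  | Form.box A, m, _ => ∀ h' ∈ M.toTemporalFrame.H m, M.Sat A m h'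
  | Form.know A, m, _ => ∀ m' h', M.R m m' → h' ∈ M.toTemporalFrame.H m' → M.Sat A m' h'
  | Form.proves t A, m, _ => A ∈ M.ev m t ∧
      ∀ m' h', M.Re m m' → h' ∈ M.toTemporalFrame.H m' → M.Sat A m' h'
  | Form.ann t, m, h => t ∈ M.act m h

/-- Validity of a formula in a jstit model. -/
def Valid (M : JstitModel Mo Ag PVar PConst PropVar)
    (A : Form Ag PVar PConst PropVar) : Prop :=
  ∀ m h, h ∈ M.toTemporalFrame.H m → M.Sat A m h

end JstitModel

/-- CS-normality of a jstit model. -/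
def CSNormal {Mo Ag PVar PConst PropVar : Type}
    (CS : Set (Form Ag PVar PConst PropVar))
    (M : JstitModel Mo Ag PVar PConst PropVar) : Prop :=
  ∀ (c : PConst) (m : Mo) (A : Form Ag PVar PConst PropVar),
    Form.proves (Pol.const c) A ∈ CS → A ∈ M.ev m (Pol.const c)

/-! ### Auxiliary lemmas for the soundness proof -/

section SoundnessAux

variable {Mo Ag PVar PConst PropVar : Type}

namespace TemporalFrame

variable (T : TemporalFrame Mo)

lemma mem_of_le {h : Set Mo} {m m' : Mo} (hh : h ∈ T.H m) (hle : T.le m' m) :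
    m' ∈ h := by
  obtain ⟨⟨hch, hmax⟩, hm⟩ := hh
  have hins : IsChain T.le (insert m' h) := by
    refine hch.insert fun b hb _ => ?_
    by_cases hbm : b = m
    · subst hbm; exact Or.inl hle
    · rcases hch hb hm hbm with h1 | h1
      · exact T.no_backward m m' b hle h1
      · exact Or.inl (T.le_trans hle h1)
  have heq := hmax _ hins (Set.subset_insert _ _)
  rw [← heq]; exact Set.mem_insert _ _

lemma H_of_le {h : Set Mo} {m m' : Mo} (hh : h ∈ T.H m) (hle : T.le m' m) :
    h ∈ T.H m' := ⟨hh.1, T.mem_of_le hh hle⟩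

end TemporalFrame

namespace JstitModel

variable (M : JstitModel Mo Ag PVar PConst PropVar)

lemma actMono {m m' : Mo} {h : Set Mo} (hle : M.le m' m)
    (hh : h ∈ M.toTemporalFrame.H m) : M.act m' h ⊆ M.act m h := by
  by_cases he : m' = m
  · subst he; exact fun _ ht => ht
  · exact M.expansion m m' h ⟨hle, he⟩ hh

/-- If `m2` is an immediate successor of `m` lying on `h`, anything presented
at `m2` under all histories was already presented at `m` under `h`. -/
lemma presentedNext {m m2 : Mo} {h : Set Mo} (hh : h ∈ M.toTemporalFrame.H m)
    (hnx : M.toTemporalFrame.Next m m2) (hm2 : m2 ∈ h) {u : Pol PVar PConst}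
    (hu : ∀ g ∈ M.toTemporalFrame.H m2, u ∈ M.act m2 g) : u ∈ M.act m h := by
  obtain ⟨m'', g, hlt, hg, hug⟩ := M.no_new m2 u hu
  have hle : M.le m'' m := hnx.2 m'' hlt
  have hgm : g ∈ M.toTemporalFrame.H m := M.toTemporalFrame.H_of_le hg hnx.1.1
  have hmem : u ∈ M.act m g := by
    refine M.actMono hle hgm ?_
    · exact hug
  have hun : M.toTemporalFrame.Undiv m g h := ⟨m2, hnx.1, hg.2, hm2⟩
  rw [← M.divide m g h hgm hh hun]; exact hmem

variable {M}

lemma satImp {A B : Form Ag PVar PConst PropVar} {m : Mo} {h : Set Mo} :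
    M.Sat (Form.imp A B) m h ↔ (M.Sat A m h → M.Sat B m h) := by
  simp only [Form.imp, JstitModel.Sat]; tauto

lemma satOr {A B : Form Ag PVar PConst PropVar} {m : Mo} {h : Set Mo} :
    M.Sat (Form.or A B) m h ↔ (M.Sat A m h ∨ M.Sat B m h) := by
  simp only [Form.or, JstitModel.Sat]; tauto

lemma satDia {A : Form Ag PVar PConst PropVar} {m : Mo} {h : Set Mo} :
    M.Sat (Form.dia A) m h ↔ ∃ h', h' ∈ M.toTemporalFrame.H m ∧ M.Sat A m h' := by
  simp only [Form.dia, JstitModel.Sat]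
  constructor
  · intro h1
    by_contra hc; push_neg at hc
    exact h1 fun h' hh' => hc h' hh'
  · rintro ⟨h', hh', hs⟩ hall
    exact hall h' hh' hs

lemma satAndList {m : Mo} {h : Set Mo} :
    ∀ (L : List (Form Ag PVar PConst PropVar)) (A : Form Ag PVar PConst PropVar),
      M.Sat (andList A L) m h ↔ (M.Sat A m h ∧ ∀ B ∈ L, M.Sat B m h)
  | [], A => by simp [andList]
  | B :: L, A => by
      simp only [andList, JstitModel.Sat, satAndList L B, List.forall_mem_cons]
      try tauto

lemma satBigOr [Inhabited PropVar] {m : Mo} {h : Set Mo} :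
    ∀ (L : List (Form Ag PVar PConst PropVar)),
      M.Sat (bigOr L) m h ↔ ∃ B ∈ L, M.Sat B m h
  | [] => by simp [bigOr, Form.bot, JstitModel.Sat]
  | [A] => by simp [bigOr]
  | A :: B :: L => by
      rw [show bigOr (A :: B :: L) = Form.or A (bigOr (B :: L)) from rfl, satOr,
        satBigOr (B :: L)]
      simp only [List.mem_cons]
      constructor
      · rintro (h1 | ⟨C, hC, h2⟩)
        · exact ⟨A, Or.inl rfl, h1⟩
        · exact ⟨C, Or.inr hC, h2⟩
      · rintro ⟨C, (rfl | hC), h2⟩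
        · exact Or.inl h2
        · exact Or.inr ⟨C, hC, h2⟩

variable (M)

lemma axValid {A : Form Ag PVar PConst PropVar} (hA : Ax A) :
    ∀ m h, h ∈ M.toTemporalFrame.H m → M.Sat A m h := by
  cases hA with
  | @a0 A ht =>
    intro m h hh
    classical
    have h1 : ∀ B C : Form Ag PVar PConst PropVar,
        (if M.Sat (Form.and B C) m h then true else false) =
          ((if M.Sat B m h then true else false) &&
            (if M.Sat C m h then true else false)) := by
      intro B C
      by_cases hB : M.Sat B m h <;> by_cases hC : M.Sat C m h <;>
        simp [JstitModel.Sat, hB, hC]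
    have h2 : ∀ B : Form Ag PVar PConst PropVar,
        (if M.Sat (Form.neg B) m h then true else false) =
          (! (if M.Sat B m h then true else false)) := by
      intro B
      by_cases hB : M.Sat B m h <;> simp [JstitModel.Sat, hB]
    have h3 := ht (fun B => if M.Sat B m h then true else false) h1 h2
    by_contra hA0
    have h3' : (if M.Sat A m h then true else false) = true := h3
    rw [if_neg hA0] at h3'
    exact Bool.false_ne_true h3'
  | boxK =>
    intro m h hh
    rw [satImp]; intro h1; rw [satImp]; intro h2
    intro h' hh'
    exact satImp.1 (h1 h' hh') (h2 h' hh')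
  | boxT =>
    intro m h hh
    rw [satImp]; intro h1
    exact h1 h hh
  | box4 =>
    intro m h hh
    rw [satImp]; intro h1
    exact fun h' _ => h1
  | box5 =>
    intro m h hh
    rw [satImp]; intro h1
    exact fun h' _ => h1
  | stitK =>
    intro m h hh
    rw [satImp]; intro h1; rw [satImp]; intro h2
    intro h' C hC hhC hh'C
    exact satImp.1 (h1 h' C hC hhC hh'C) (h2 h' C hC hhC hh'C)
  | @stitT j A =>
    intro m h hh
    rw [satImp]; intro h1
    obtain ⟨C, hC, hmem⟩ := M.choice_cover m j h hh
    exact h1 h C hC hmem hmem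
  | @stit4 j A =>
    intro m h hh
    rw [satImp]; intro h1
    intro h' C hC hhC hh'C
    intro h'' C' hC' hh'C' hh''C'
    have hCC' : C = C' := M.choice_disjoint m j C C' hC hC' ⟨h', hh'C, hh'C'⟩
    exact h1 h'' C hC hhC (by rw [hCC']; exact hh''C')
  | @stit5 j A =>
    intro m h hh
    rw [satImp]; intro h1
    intro h' C hC hhC hh'C
    intro hstit'
    apply h1
    intro h'' C' hC' hhC' hh''C'
    have hCC' : C' = C := M.choice_disjoint m j C' C hC' hC ⟨h, hhC', hhC⟩
    exact hstit' h'' C' hC' (by rw [hCC']; exact hh'C) hh''C'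
  | @a2 j A =>
    intro m h hh
    rw [satImp]; intro h1
    intro h' C hC hhC hh'C
    exact h1 h' (M.choice_cell_sub m j C hC hh'C)
  | @a3 p L hnd =>
    intro m h hh
    rw [satImp]; intro hyp
    classical
    have hall : ∀ q ∈ (p :: L), ∃ h', h' ∈ M.toTemporalFrame.H m ∧
        M.Sat (Form.stit q.1 q.2) m h' := by
      rw [satAndList _ _] at hyp
      intro q hq
      rcases List.mem_cons.1 hq with rfl | hq
      · exact satDia.1 hyp.1
      · exact satDia.1 (hyp.2 _ (List.mem_map_of_mem hq))
    have key : ∀ q : Ag × Form Ag PVar PConst PropVar,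
        ∃ C, C ∈ M.choice m q.1 ∧
          (q ∈ (p :: L) → ∃ h', h' ∈ C ∧ M.Sat (Form.stit q.1 q.2) m h') := by
      intro q
      by_cases hq : q ∈ (p :: L)
      · obtain ⟨h', hh', hs⟩ := hall q hq
        obtain ⟨C, hC, hmem⟩ := M.choice_cover m q.1 h' hh'
        exact ⟨C, hC, fun _ => ⟨h', hmem, hs⟩⟩
      · obtain ⟨C, hC, _⟩ := M.choice_cover m q.1 h hh
        exact ⟨C, hC, fun hq' => absurd hq' hq⟩
    choose Cf hCf hCs using key
    have hinj := List.inj_on_of_nodup_map hnd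
    set f : Ag → Set (Set Mo) := fun j =>
      if hj : ∃ q, q ∈ (p :: L) ∧ q.1 = j then Cf hj.choose else Cf (j, p.2) with hfdef
    have hf : ∀ j, f j ∈ M.choice m j := by
      intro j
      by_cases hj : ∃ q, q ∈ (p :: L) ∧ q.1 = j
      · simp only [hfdef]
        rw [dif_pos hj]
        have := hCf hj.choose
        rw [hj.choose_spec.2] at this
        exact this
      · simp only [hfdef]
        rw [dif_neg hj]
        exact hCf (j, p.2)
    have hfq : ∀ q ∈ (p :: L), f q.1 = Cf q := by
      intro q hq
      have hj : ∃ q', q' ∈ (p :: L) ∧ q'.1 = q.1 := ⟨q, hq, rfl⟩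
      simp only [hfdef]
      rw [dif_pos hj]
      exact congrArg Cf (hinj hj.choose_spec.1 hq hj.choose_spec.2)
    obtain ⟨h'', hh''⟩ := M.independence m f hf
    have hmemf : ∀ j, h'' ∈ f j := fun j => Set.mem_iInter.1 hh'' j
    have hh''H : h'' ∈ M.toTemporalFrame.H m :=
      M.choice_cell_sub m p.1 (f p.1) (hf p.1) (hmemf p.1)
    have hstit : ∀ q ∈ (p :: L), M.Sat (Form.stit q.1 q.2) m h'' := by
      intro q hq
      intro h₃ C hC hmem2 hmem3
      have hCeq : C = Cf q := M.choice_disjoint m q.1 C (Cf q) hC (hCf q)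
        ⟨h'', hmem2, by rw [← hfq q hq]; exact hmemf q.1⟩
      obtain ⟨hq', hq'C, hq'sat⟩ := hCs q hq
      exact hq'sat h₃ (Cf q) (hCf q) hq'C (by rw [← hCeq]; exact hmem3)
    refine satDia.2 ⟨h'', hh''H, (satAndList _ _).2 ⟨hstit p List.mem_cons_self, ?_⟩⟩
    intro B hB
    obtain ⟨q, hqL, rfl⟩ := List.mem_map.1 hB
    exact hstit q (List.mem_cons_of_mem _ hqL)
  | @a4 s t A B =>
    intro m h hh
    rw [satImp]; intro h1; rw [satImp]; intro h2
    refine ⟨M.ev_app m s t A B h1.1 h2.1, ?_⟩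
    intro m' h' hre hh'
    exact satImp.1 (h1.2 m' h' hre hh') (h2.2 m' h' hre hh')
  | @a5 t A =>
    intro m h hh
    rw [satImp]; intro h1
    refine ⟨⟨M.ev_bang m t A h1.1, ?_⟩, ?_⟩
    · intro m' h' hre hh'
      exact ⟨M.ev_mono m m' t hre h1.1,
        fun m'' h'' hre' hh'' => h1.2 m'' h'' (M.Re_trans hre hre') hh''⟩
    · intro m' h' hR hh'
      exact h1.2 m' h' (M.R_sub_Re hR) hh'
  | @a6 s t A =>
    intro m h hh
    rw [satImp]; intro h1
    rcases satOr.1 h1 with hsA | htA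
    · exact ⟨M.ev_sum_left m s t hsA.1, hsA.2⟩
    · exact ⟨M.ev_sum_right m s t htA.1, htA.2⟩
  | knowK =>
    intro m h hh
    rw [satImp]; intro h1; rw [satImp]; intro h2
    intro m' h' hR hh'
    exact satImp.1 (h1 m' h' hR hh') (h2 m' h' hR hh')
  | knowT =>
    intro m h hh
    rw [satImp]; intro h1
    exact h1 m h (M.R_refl m) hh
  | know4 =>
    intro m h hh
    rw [satImp]; intro h1
    intro m' h' hR hh' m'' h'' hR' hh''
    exact h1 m'' h'' (M.R_trans hR hR') hh''
  | a8 =>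
    intro m h hh
    rw [satImp]; intro h1
    intro h' hh' m' h₂ hR hh₂ h₃ hh₃
    exact h1 m' h₃ hR hh₃
  | @a9 t =>
    intro m h hh
    rw [satImp]; intro h1
    intro m' h' hR hh' h'' hh''
    exact M.transparent m m' t (M.R_sub_Re hR) h1 h'' hh''

end JstitModel

end SoundnessAux

section SoundnessMain

variable {Mo Ag PVar PConst PropVar : Type}

namespace JstitModel

variable (M : JstitModel Mo Ag PVar PConst PropVar)

lemma exists_common_pred {m1 : Mo} :
    ∀ (l : List (Pol PVar PConst)), l ≠ [] →
      (∀ t ∈ l, ∃ m' g, M.toTemporalFrame.lt m' m1 ∧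
        g ∈ M.toTemporalFrame.H m1 ∧ t ∈ M.act m' g) →
      ∃ m', M.toTemporalFrame.lt m' m1 ∧
        ∀ t ∈ l, ∃ g, g ∈ M.toTemporalFrame.H m1 ∧ t ∈ M.act m' g := by
  intro l
  induction l with
  | nil => intro hne _; exact absurd rfl hne
  | cons t rest ih =>
    intro _ hall
    obtain ⟨ma, ga, hlta, hga, hta⟩ := hall t List.mem_cons_self
    by_cases hr : rest = []
    · subst hr
      refine ⟨ma, hlta, ?_⟩
      intro t' ht'
      rcases List.mem_cons.1 ht' with rfl | hmem
      · exact ⟨ga, hga, hta⟩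
      · simp at hmem
    · obtain ⟨mb, hltb, hrest⟩ := ih hr fun t' ht' => hall t' (List.mem_cons_of_mem _ ht')
      rcases M.no_backward m1 ma mb hlta.1 hltb.1 with hle | hle
      · refine ⟨mb, hltb, ?_⟩
        intro t' ht'
        rcases List.mem_cons.1 ht' with rfl | hmem
        · exact ⟨ga, hga, M.actMono hle (M.toTemporalFrame.H_of_le hga hltb.1) hta⟩
        · exact hrest t' hmem
      · refine ⟨ma, hlta, ?_⟩
        intro t' ht'
        rcases List.mem_cons.1 ht' with rfl | hmem
        · exact ⟨ga, hga, hta⟩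
        · obtain ⟨g, hg, htg⟩ := hrest t' hmem
          exact ⟨g, hg, M.actMono hle (M.toTemporalFrame.H_of_le hg hlta.1) htg⟩

lemma SinTheta {ts : List (Pol PVar PConst)} (hne : ts ≠ []) {m0 : Mo}
    (hm0 : ∀ t ∈ ts, ∀ g ∈ M.toTemporalFrame.H m0, t ∈ M.act m0 g) :
    {m' | ∀ t ∈ ts, ∀ g ∈ M.toTemporalFrame.H m', t ∈ M.act m' g} ∈
      M.toJstitFrame.Theta m0 := by
  refine ⟨hm0, ?_, ?_, ?_⟩
  · intro m1 m2 h1 hre t ht g hg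
    exact M.transparent m1 m2 t hre (fun g' hg' => h1 t ht g' hg') g hg
  · intro m1 hcond t ht g hg
    obtain ⟨m2, hm2g, hnx, hS⟩ := hcond g hg
    exact M.presentedNext hg hnx hm2g fun g' hg' => hS t ht g' hg'
  · intro m1 hm1 hdense
    have hall : ∀ t ∈ ts, ∃ m' g, M.toTemporalFrame.lt m' m1 ∧
        g ∈ M.toTemporalFrame.H m1 ∧ t ∈ M.act m' g := by
      intro t ht
      obtain ⟨m', g, hlt, hg, htg⟩ := M.no_new m1 t fun g hg => hm1 t ht g hg
      exact ⟨m', g, hlt, hg, htg⟩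
    obtain ⟨m', hlt', hgs⟩ := M.exists_common_pred ts hne hall
    obtain ⟨m4, hlt4a, hlt4b⟩ := hdense m' hlt'
    refine ⟨m4, hlt4b, ?_⟩
    intro t ht g4 hg4
    obtain ⟨g, hg, htg⟩ := hgs t ht
    have hg4m' : g4 ∈ M.toTemporalFrame.H m' := M.toTemporalFrame.H_of_le hg4 hlt4a.1
    have hgm' : g ∈ M.toTemporalFrame.H m' := M.toTemporalFrame.H_of_le hg hlt'.1
    have hm4g : m4 ∈ g := M.toTemporalFrame.mem_of_le hg hlt4b.1
    have hundiv : M.toTemporalFrame.Undiv m' g g4 := ⟨m4, hlt4a, hm4g, hg4.2⟩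
    have hmem : t ∈ M.act m' g4 := by
      rw [← M.divide m' g g4 hgm' hg4m' hundiv]; exact htg
    exact M.expansion m4 m' g4 hlt4a hg4 hmem

lemma rdSound [Inhabited PropVar] (hreg : M.toJstitFrame.Regular)
    {A : Form Ag PVar PConst PropVar} {ts ss : List (Pol PVar PConst)}
    (ih : M.Valid (Form.imp (Form.know A)
      (bigOr ((ts.map fun t => Form.neg (Form.box (Form.ann t))) ++
              (ss.map fun s => Form.box (Form.ann s)))))) :
    M.Valid (Form.imp (Form.know A)
      (bigOr ((ts.map fun t => Form.neg (Form.ann t)) ++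
              (ss.map fun s => Form.ann s)))) := by
  intro m h hh
  rw [satImp]
  intro hK
  by_contra hcon
  rw [satBigOr] at hcon
  push_neg at hcon
  have hts : ∀ t ∈ ts, t ∈ M.act m h := by
    intro t ht
    have := hcon _ (List.mem_append_left _ (List.mem_map_of_mem ht))
    simpa [JstitModel.Sat, not_not] using this
  have hss : ∀ s ∈ ss, s ∉ M.act m h := by
    intro s hs
    have := hcon _ (List.mem_append_right _ (List.mem_map_of_mem hs))
    simpa [JstitModel.Sat] using this
  have P : ∀ m2 h2, h2 ∈ M.toTemporalFrame.H m2 → M.R m m2 →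
      (∃ t ∈ ts, ∃ g ∈ M.toTemporalFrame.H m2, t ∉ M.act m2 g) ∨
      (∃ s ∈ ss, ∀ g ∈ M.toTemporalFrame.H m2, s ∈ M.act m2 g) := by
    intro m2 h2 hh2 hR
    have hK2 : M.Sat (Form.know A) m2 h2 :=
      fun m3 h3 hR3 hh3 => hK m3 h3 (M.R_trans hR hR3) hh3
    have hbig := satImp.1 (ih m2 h2 hh2) hK2
    rw [satBigOr] at hbig
    obtain ⟨B, hB, hsat⟩ := hbig
    rcases List.mem_append.1 hB with hB | hB
    · obtain ⟨t, ht, rfl⟩ := List.mem_map.1 hB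
      refine Or.inl ⟨t, ht, ?_⟩
      by_contra hcc; push_neg at hcc
      exact hsat fun g hg => hcc g hg
    · obtain ⟨s, hs, rfl⟩ := List.mem_map.1 hB
      exact Or.inr ⟨s, hs, fun g hg => hsat g hg⟩
  rcases P m h hh (M.R_refl m) with ⟨t0, ht0, g0, hg0, ht0g0⟩ | ⟨s, hs, hsAct⟩
  swap
  · exact hss s hs (hsAct h hh)
  have htsne : ts ≠ [] := fun he => by simp [he] at ht0
  have hUg0 : ¬ M.toTemporalFrame.Undiv m g0 h := fun hu =>
    ht0g0 (by rw [M.divide m g0 h hg0 hh hu]; exact hts t0 ht0)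
  by_cases hc : ∃ m1 ∈ h, M.toTemporalFrame.lt m m1
  · obtain ⟨m1, hm1h, hlt1⟩ := hc
    have hhm1 : h ∈ M.toTemporalFrame.H m1 := ⟨hh.1, hm1h⟩
    have hS0 : ∀ m0, M.toTemporalFrame.lt m m0 → M.le m0 m1 →
        ∀ t ∈ ts, ∀ g ∈ M.toTemporalFrame.H m0, t ∈ M.act m0 g := by
      intro m0 hlt0 hle0 t ht g hg
      have hm0h : m0 ∈ h := M.toTemporalFrame.mem_of_le hhm1 hle0
      have hgH : g ∈ M.toTemporalFrame.H m := M.toTemporalFrame.H_of_le hg hlt0.1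
      have hu : M.toTemporalFrame.Undiv m g h := ⟨m0, hlt0, hg.2, hm0h⟩
      have hmem : t ∈ M.act m g := by
        rw [M.divide m g h hgH hh hu]; exact hts t ht
      exact M.expansion m0 m g hlt0 hg hmem
    have hdiv : ∀ g ∈ M.toTemporalFrame.H m1, ¬ M.toTemporalFrame.Undiv m g0 g := by
      rintro g hg ⟨m'', hlt'', hm''g0, hm''g⟩
      have hcomp : M.le m'' m1 ∨ M.le m1 m'' := by
        by_cases he : m'' = m1
        · exact Or.inl (he ▸ M.le_refl m1)
        · exact hg.1.1 hm''g hg.2 he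
      rcases hcomp with hle | hle
      · exact hUg0 ⟨m'', hlt'', hm''g0, M.toTemporalFrame.mem_of_le hhm1 hle⟩
      · exact hUg0 ⟨m1, hlt1, M.toTemporalFrame.mem_of_le ⟨hg0.1, hm''g0⟩ hle, hm1h⟩
    have hnonext : ∀ m' ∈ g0, M.toTemporalFrame.Next m m' →
        m' ∉ {m' | ∀ t ∈ ts, ∀ g ∈ M.toTemporalFrame.H m', t ∈ M.act m' g} := by
      intro m' hm'g0 hnx hm'S
      exact ht0g0 (M.presentedNext hg0 hnx hm'g0 fun g hg => hm'S t0 ht0 g hg)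
    obtain ⟨m2, hle2, hnx2⟩ := hreg m m1 hlt1
      ⟨{m' | ∀ t ∈ ts, ∀ g ∈ M.toTemporalFrame.H m', t ∈ M.act m' g},
        fun m0 ha hb => M.SinTheta htsne (hS0 m0 ha hb),
        fun hmem => ht0g0 (hmem t0 ht0 g0 hg0),
        g0, hg0, hdiv, hnonext⟩
    have hm2S : ∀ t ∈ ts, ∀ g ∈ M.toTemporalFrame.H m2, t ∈ M.act m2 g :=
      hS0 m2 hnx2.1 hle2
    have hm2h : m2 ∈ h := M.toTemporalFrame.mem_of_le hhm1 hle2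
    rcases P m2 h ⟨hh.1, hm2h⟩ (M.le_sub_R hnx2.1.1) with
      ⟨t, ht, g, hg, htg⟩ | ⟨s, hs2, hsAct⟩
    · exact htg (hm2S t ht g hg)
    · exact hss s hs2 (M.presentedNext hh hnx2 hm2h hsAct)
  · push_neg at hc
    have hmax : ∀ y, M.le m y → y = m := by
      intro y hy
      by_contra hne
      have hins : IsChain M.le (insert y h) := by
        refine hh.1.1.insert ?_
        intro b hb _
        have hbm : M.le b m := by
          by_cases he : b = m
          · exact he ▸ M.le_refl m
          · rcases hh.1.1 hb hh.2 he with h1 | h1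
            · exact h1
            · exact absurd (⟨h1, fun e => he e.symm⟩ : M.toTemporalFrame.lt m b)
                (hc b hb)
        exact Or.inr (M.le_trans hbm hy)
      have heq := hh.1.2 _ hins (Set.subset_insert _ _)
      have hyh : y ∈ h := by rw [← heq]; exact Set.mem_insert y h
      exact hc y hyh ⟨hy, fun e => hne e.symm⟩
    have hchar : ∀ g, g ∈ M.toTemporalFrame.H m → g = {x | M.le x m} := by
      intro g hg
      have hsub : g ⊆ {x | M.le x m} := by
        intro x hx
        by_cases he : x = m
        · exact he ▸ M.le_refl m
        · rcases hg.1.1 hx hg.2 he with h1 | h1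
          · exact h1
          · exact absurd (hmax x h1) he
      have hch : IsChain M.le {x | M.le x m} := fun a ha b hb _ =>
        M.no_backward m a b ha hb
      exact (hg.1.2 _ hch hsub).symm
    have hg0h : g0 = h := (hchar g0 hg0).trans (hchar h hh).symm
    exact ht0g0 (by rw [hg0h]; exact hts t0 ht0)

lemma csValid {CS : Set (Form Ag PVar PConst PropVar)}
    (hnorm : CSNormal CS M) (hCS : IsConstSpec CS) :
    ∀ {B : Form Ag PVar PConst PropVar}, ConstIter B → B ∈ CS → M.Valid B := by
  intro B hCI
  induction hCI with
  | @base c A hAx =>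
    intro hmem m h hh
    exact ⟨hnorm c m A hmem, fun m' h' _ hh' => M.axValid hAx m' h' hh'⟩
  | @step c B hCI ih =>
    intro hmem m h hh
    obtain ⟨c', B'', heq⟩ : ∃ c' B'', B = Form.proves (Pol.const c') B'' := by
      cases hCI with
      | base _ => exact ⟨_, _, rfl⟩
      | step _ => exact ⟨_, _, rfl⟩
    have hBCS : B ∈ CS := by
      rw [heq]
      exact hCS.2 c c' B'' (by rw [← heq]; exact hmem)
    exact ⟨hnorm c m B hmem, fun m' h' _ hh' => ih hBCS m' h' hh'⟩

end JstitModel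

end SoundnessMain

/-- Theorem 5, soundness: every theorem of Σ_D(CS) is valid in every
CS-normal jstit model based on a regular jstit frame for Ag. -/
theorem stmt13 {Ag PVar PConst PropVar : Type} [Finite Ag]
    [Countable PVar] [Infinite PVar] [Countable PConst] [Infinite PConst]
    [Countable PropVar] [Infinite PropVar] [Inhabited PropVar]
    (CS : Set (Form Ag PVar PConst PropVar)) (hCS : IsConstSpec CS)
    (A : Form Ag PVar PConst PropVar) (hA : Proves CS A) :
    ∀ (Mo : Type) (M : JstitModel Mo Ag PVar PConst PropVar),
      M.toJstitFrame.Regular → CSNormal CS M → M.Valid A := by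
  intro Mo M hreg hnorm
  induction hA with
  | ax h => exact fun m h' hh => M.axValid h m h' hh
  | mp himp ha ih1 ih2 =>
    intro m h hh
    exact JstitModel.satImp.1 (ih1 m h hh) (ih2 m h hh)
  | nec ha ih =>
    intro m h hh
    exact fun m' h' _ hh' => ih m' h' hh'
  | rd hne hpre ih => exact M.rdSound hreg ih
  | rcs hB => exact M.csValid hnorm hCS (hCS.1 _ hB) hB
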